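/- Let K = ℚ(√f) be a real quadratic field and w₁,…,w_k, h₁,…,h_k ∈ K. Suppose Σ_{i=1}^k w_i ∧_ℚ (s·h_i) = 0 in ℝ ∧_ℚ ℝ for all s ∈ K. Then Σ_{i=1}^k (w'_i·s·h_i − w_i·s'·h'_i) = 0 for all s ∈ K, and in particular Σ w_i h'_i = −Σ w'_i h_i and Σ w_i h'_i = Σ w'_i h_i, hence Σ_{i=1}^k w_i·h'_i = 0. -/

import Mathlib

/-- The wedge product `a ∧_ℚ b` in the exterior algebra of `ℝ` over `ℚ`. -/
noncomputable def wedge (a b : ℝ) : ExteriorAlgebra ℚ ℝ :=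
  ExteriorAlgebra.ι ℚ a * ExteriorAlgebra.ι ℚ b

lemma exists_functionals (f : ℕ) (hf : Squarefree f) (hf1 : 1 < f) :
    ∃ g0 g1 : ℝ →ₗ[ℚ] ℚ, g0 1 = 1 ∧ g0 (Real.sqrt f) = 0 ∧
      g1 1 = 0 ∧ g1 (Real.sqrt f) = 1 := by
  have hirr : Irrational (Real.sqrt f) := by
    rw [irrational_sqrt_natCast_iff]
    rintro ⟨r, rfl⟩
    have hr : r = 1 := Nat.isUnit_iff.mp (hf r (dvd_refl _))
    subst hr
    simp at hf1
  have li : LinearIndependent ℚ ![(1 : ℝ), Real.sqrt f] := by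
    rw [LinearIndependent.pair_iff]
    intro s t hst
    by_cases ht : t = 0
    · subst ht
      constructor
      · have : (s:ℝ) = 0 := by simpa [Rat.smul_def] using hst
        exact_mod_cast this
      · rfl
    · exfalso
      apply hirr
      refine ⟨-s / t, ?_⟩
      have h1 : (s:ℝ) + (t:ℝ) * Real.sqrt f = 0 := by
        simpa [Rat.smul_def] using hst
      have ht' : (t:ℝ) ≠ 0 := by exact_mod_cast ht
      push_cast
      field_simp
      linarith
  let B := Module.Basis.span li
  obtain ⟨g0, hg0⟩ := LinearMap.exists_extend (B.coord 0)
  obtain ⟨g1, hg1⟩ := LinearMap.exists_extend (B.coord 1)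
  have hmem : ∀ i : Fin 2, ![(1:ℝ), Real.sqrt f] i ∈
      Submodule.span ℚ (Set.range ![(1:ℝ), Real.sqrt f]) :=
    fun i => Submodule.subset_span ⟨i, rfl⟩
  have hB : ∀ i : Fin 2, B i = ⟨![(1:ℝ), Real.sqrt f] i, hmem i⟩ := by
    intro i
    apply Subtype.ext
    exact congrArg Subtype.val (Module.Basis.span_apply li i)
  have key : ∀ (g : ℝ →ₗ[ℚ] ℚ) (j : Fin 2), g.comp (Submodule.span ℚ
      (Set.range ![(1:ℝ), Real.sqrt f])).subtype = B.coord j →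
      ∀ i : Fin 2, g (![(1:ℝ), Real.sqrt f] i) = if i = j then 1 else 0 := by
    intro g j hg i
    have : g (![(1:ℝ), Real.sqrt f] i) = B.coord j ⟨_, hmem i⟩ := by
      rw [← hg]; rfl
    rw [this, ← hB i, Module.Basis.coord_apply, Module.Basis.repr_self]
    simp [Finsupp.single_apply, eq_comm]
  refine ⟨g0, g1, ?_, ?_, ?_, ?_⟩
  · simpa using key g0 0 hg0 0
  · simpa using key g0 0 hg0 1
  · simpa using key g1 1 hg1 0
  · simpa using key g1 1 hg1 1

lemma exists_wedge_functional (g0 g1 : ℝ →ₗ[ℚ] ℚ) :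
    ∃ F : ExteriorAlgebra ℚ ℝ →ₗ[ℚ] ℚ,
      ∀ a b : ℝ, F (wedge a b) = g0 a * g1 b - g0 b * g1 a := by
  let G : ℝ →ₗ[ℚ] (Fin 2 → ℚ) := LinearMap.pi ![g0, g1]
  let φ : ℝ [⋀^Fin 2]→ₗ[ℚ] ℚ := (Matrix.detRowAlternating).compLinearMap G
  let fam : ∀ i : ℕ, ℝ [⋀^Fin i]→ₗ[ℚ] ℚ :=
    Function.update (fun i => (0 : ℝ [⋀^Fin i]→ₗ[ℚ] ℚ)) 2 φ
  refine ⟨ExteriorAlgebra.liftAlternating fam, fun a b => ?_⟩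
  rw [wedge, ExteriorAlgebra.liftAlternating_ι_mul, ExteriorAlgebra.liftAlternating_ι]
  have hfam2 : fam 2 = φ := Function.update_self _ _ _
  show (fam (Nat.succ 1)).curryLeft a ![b] = _
  have h2 : fam (Nat.succ 1) = φ := hfam2
  rw [h2, AlternatingMap.curryLeft_apply_apply]
  have hφ : φ (Matrix.vecCons a ![b]) = (Matrix.of (⇑G ∘ ![a, b])).det := rfl
  rw [hφ, Matrix.det_fin_two]
  simp [G, LinearMap.pi_apply]; ring


/-- If `Σ w_i ∧ (s·h_i) = 0` for all `s ∈ K = ℚ(√f)`, then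
`Σ (w'_i·s·h_i − w_i·s'·h'_i) = 0` for all `s ∈ K`; in particular
`Σ w_i h'_i = −Σ w'_i h_i` and `Σ w_i h'_i = Σ w'_i h_i`, hence `Σ w_i h'_i = 0`. -/
theorem stmt13 (f : ℕ) (hf : Squarefree f) (hf1 : 1 < f)
    (k : ℕ) (w h w' h' : Fin k → ℝ)
    (aw bw ah bh : Fin k → ℚ)
    (hwdef : ∀ i, w i = (aw i : ℝ) + (bw i : ℝ) * Real.sqrt f)
    (hw'def : ∀ i, w' i = (aw i : ℝ) - (bw i : ℝ) * Real.sqrt f)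
    (hhdef : ∀ i, h i = (ah i : ℝ) + (bh i : ℝ) * Real.sqrt f)
    (hh'def : ∀ i, h' i = (ah i : ℝ) - (bh i : ℝ) * Real.sqrt f)
    (hSAFs : ∀ sa sb : ℚ,
      ∑ i, wedge (w i) (((sa : ℝ) + (sb : ℝ) * Real.sqrt f) * h i) = 0) :
    (∀ sa sb : ℚ,
      ∑ i, (w' i * (((sa : ℝ) + (sb : ℝ) * Real.sqrt f) * h i) -
            w i * (((sa : ℝ) - (sb : ℝ) * Real.sqrt f) * h' i)) = 0) ∧
    ∑ i, w i * h' i = -∑ i, w' i * h i ∧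
    ∑ i, w i * h' i = ∑ i, w' i * h i ∧
    ∑ i, w i * h' i = 0 := by
  obtain ⟨g0, g1, h01, h0u, h10, h1u⟩ := exists_functionals f hf hf1
  obtain ⟨F, hF⟩ := exists_wedge_functional g0 g1
  set u := Real.sqrt f with hu_def
  have hu : u * u = (f : ℝ) := Real.mul_self_sqrt (by positivity)
  have hg0 : ∀ p q : ℚ, g0 ((p : ℝ) + (q : ℝ) * u) = p := by
    intro p q
    have e : (p : ℝ) + (q : ℝ) * u = p • (1 : ℝ) + q • u := by
      rw [Rat.smul_def, Rat.smul_def]; ring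
    rw [e, map_add, map_smul, map_smul, h01, h0u]; simp
  have hg1 : ∀ p q : ℚ, g1 ((p : ℝ) + (q : ℝ) * u) = q := by
    intro p q
    have e : (p : ℝ) + (q : ℝ) * u = p • (1 : ℝ) + q • u := by
      rw [Rat.smul_def, Rat.smul_def]; ring
    rw [e, map_add, map_smul, map_smul, h10, h1u]; simp
  have hmul : ∀ sa sb p q : ℚ, ((sa : ℝ) + (sb : ℝ) * u) * ((p : ℝ) + (q : ℝ) * u)
      = ((sa * p + sb * q * f : ℚ) : ℝ) + ((sa * q + sb * p : ℚ) : ℝ) * u := by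
    intro sa sb p q
    push_cast
    linear_combination ((sb : ℝ) * (q : ℝ)) * hu
  have key : ∀ sa sb : ℚ,
      ∑ i, (aw i * (sa * bh i + sb * ah i) - (sa * ah i + sb * bh i * f) * bw i) = 0 := by
    intro sa sb
    have h0 := congrArg F (hSAFs sa sb)
    rw [map_sum, map_zero] at h0
    rw [← h0]
    apply Finset.sum_congr rfl
    intro i _
    rw [hF, hwdef, hhdef, hmul sa sb (ah i) (bh i), hg0, hg1, hg0, hg1]
  have P0 : ∑ i, (aw i * bh i - ah i * bw i) = 0 := by
    rw [← key 1 0]; apply Finset.sum_congr rfl; intro i _; ring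
  have P0' : ∑ i, (ah i * bw i - aw i * bh i) = 0 := by
    have : ∑ i, (ah i * bw i - aw i * bh i) = -∑ i, (aw i * bh i - ah i * bw i) := by
      rw [← Finset.sum_neg_distrib]; apply Finset.sum_congr rfl; intro i _; ring
    rw [this, P0, neg_zero]
  have Q0 : ∑ i, (aw i * ah i - bh i * bw i * f) = 0 := by
    rw [← key 0 1]; apply Finset.sum_congr rfl; intro i _; ring
  have S1 : ∑ i, w i * h' i = 0 := by
    have hterm : ∀ i, w i * h' i
        = ((aw i * ah i - bh i * bw i * f : ℚ) : ℝ)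
          + ((ah i * bw i - aw i * bh i : ℚ) : ℝ) * u := by
      intro i
      rw [hwdef, hh'def]
      push_cast
      linear_combination (-(bw i : ℝ) * (bh i : ℝ)) * hu
    calc ∑ i, w i * h' i
        = ∑ i, (((aw i * ah i - bh i * bw i * f : ℚ) : ℝ)
            + ((ah i * bw i - aw i * bh i : ℚ) : ℝ) * u) :=
          Finset.sum_congr rfl fun i _ => hterm i
      _ = ((∑ i, (aw i * ah i - bh i * bw i * f) : ℚ) : ℝ)
            + ((∑ i, (ah i * bw i - aw i * bh i) : ℚ) : ℝ) * u := by
          rw [Finset.sum_add_distrib, ← Finset.sum_mul]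
          push_cast
          ring
      _ = 0 := by rw [P0', Q0]; simp
  have S2 : ∑ i, w' i * h i = 0 := by
    have hterm : ∀ i, w' i * h i
        = ((aw i * ah i - bh i * bw i * f : ℚ) : ℝ)
          + ((aw i * bh i - ah i * bw i : ℚ) : ℝ) * u := by
      intro i
      rw [hw'def, hhdef]
      push_cast
      linear_combination (-(bw i : ℝ) * (bh i : ℝ)) * hu
    calc ∑ i, w' i * h i
        = ∑ i, (((aw i * ah i - bh i * bw i * f : ℚ) : ℝ)
            + ((aw i * bh i - ah i * bw i : ℚ) : ℝ) * u) :=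
          Finset.sum_congr rfl fun i _ => hterm i
      _ = ((∑ i, (aw i * ah i - bh i * bw i * f) : ℚ) : ℝ)
            + ((∑ i, (aw i * bh i - ah i * bw i) : ℚ) : ℝ) * u := by
          rw [Finset.sum_add_distrib, ← Finset.sum_mul]
          push_cast
          ring
      _ = 0 := by rw [P0, Q0]; simp
  refine ⟨?_, by rw [S1, S2]; ring, by rw [S1, S2], S1⟩
  intro sa sb
  have hterm : ∀ i, w' i * (((sa : ℝ) + (sb : ℝ) * u) * h i) -
        w i * (((sa : ℝ) - (sb : ℝ) * u) * h' i)
      = (2 * (sa : ℝ) * u) * ((aw i * bh i - ah i * bw i : ℚ) : ℝ)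
        + (2 * (sb : ℝ) * u) * ((aw i * ah i - bh i * bw i * f : ℚ) : ℝ) := by
    intro i
    rw [hw'def, hwdef, hhdef, hh'def]
    push_cast
    linear_combination (-2 * (sb : ℝ) * (bw i : ℝ) * (bh i : ℝ) * u) * hu
  calc ∑ i, (w' i * (((sa : ℝ) + (sb : ℝ) * u) * h i) -
        w i * (((sa : ℝ) - (sb : ℝ) * u) * h' i))
      = ∑ i, ((2 * (sa : ℝ) * u) * ((aw i * bh i - ah i * bw i : ℚ) : ℝ)
        + (2 * (sb : ℝ) * u) * ((aw i * ah i - bh i * bw i * f : ℚ) : ℝ)) :=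
        Finset.sum_congr rfl fun i _ => hterm i
    _ = (2 * (sa : ℝ) * u) * ((∑ i, (aw i * bh i - ah i * bw i) : ℚ) : ℝ)
        + (2 * (sb : ℝ) * u) * ((∑ i, (aw i * ah i - bh i * bw i * f) : ℚ) : ℝ) := by
        rw [Finset.sum_add_distrib, ← Finset.mul_sum, ← Finset.mul_sum]
        push_cast
        ring
    _ = 0 := by rw [P0, Q0]; simp
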